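/- arXiv:2405.13437 — 15 statements merged into one kernel-verified Lean document; each statement's English description precedes it below -/
import Mathlib

section
/- In a frame L, for every element a the meet ⨅{x ∈ L : a < x} is exact; that is, for every b ∈ L one has (⨅{x : a < x}) ⊔ b = ⨅{x ⊔ b : a < x}. -/
/-- In a frame `L`, for every element `a` the meet `⨅ {x | a < x}` is exact:
for every `b` one has `(⨅ {x | a < x}) ⊔ b = ⨅ {x ⊔ b | a < x}`. -/
theorem exactInf_of_strictly_above {L : Type*} [Order.Frame L] (a : L) :
    ∀ b : L, sInf {x : L | a < x} ⊔ b = sInf ((fun x => x ⊔ b) '' {x : L | a < x}) := by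
  intro b
  apply le_antisymm
  · apply le_sInf
    rintro _ ⟨x, hx, rfl⟩
    exact sup_le_sup_right (sInf_le hx) b
  · by_cases h : b ≤ a
    · have h1 : sInf ((fun x => x ⊔ b) '' {x : L | a < x}) ≤ sInf {x : L | a < x} := by
        apply le_sInf
        intro x hx
        have := sInf_le (Set.mem_image_of_mem (fun x => x ⊔ b) hx)
        simpa [sup_eq_left.mpr (h.trans hx.le)] using this
      exact h1.trans le_sup_left
    · have hm : a ⊔ b ∈ {x : L | a < x} := left_lt_sup.mpr h
      have h1 : sInf ((fun x => x ⊔ b) '' {x : L | a < x}) ≤ a ⊔ b := by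
        have := sInf_le (Set.mem_image_of_mem (fun x => x ⊔ b) hm)
        simpa using this
      exact h1.trans (sup_le_sup_right (le_sInf fun x hx => hx.le) b)
end

section
/- Let L be a frame and p ∈ L a prime element. The completely prime filter {x ∈ L : x ≰ p} is closed under exact meets (i.e., is an exact filter) if and only if p is a covered prime. -/
/-- A subset of a frame has exact infimum if joining commutes with the infimum. -/
def ExactInfSet {L : Type*} [Order.Frame L] (S : Set L) : Prop :=
  ∀ z : L, sInf S ⊔ z = sInf ((fun x => x ⊔ z) '' S)

/-- A filter of a frame: contains `⊤`, upward closed, closed under binary meets. -/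
def IsFrameFilter {L : Type*} [Order.Frame L] (F : Set L) : Prop :=
  ⊤ ∈ F ∧ (∀ x y : L, x ∈ F → x ≤ y → y ∈ F) ∧ (∀ x y : L, x ∈ F → y ∈ F → x ⊓ y ∈ F)

/-- An exact filter: a filter closed under exact meets of its members. -/
def IsExactFilter {L : Type*} [Order.Frame L] (F : Set L) : Prop :=
  IsFrameFilter F ∧ ∀ S : Set L, S ⊆ F → ExactInfSet S → sInf S ∈ F

/-- A prime element of a frame. -/
def IsPrimeElem {L : Type*} [Order.Frame L] (p : L) : Prop :=
  p ≠ ⊤ ∧ ∀ x y : L, x ⊓ y ≤ p → x ≤ p ∨ y ≤ p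

/-- A covered prime: a prime `p` such that any meet equal to `p` has a member equal to `p`. -/
def IsCoveredPrime {L : Type*} [Order.Frame L] (p : L) : Prop :=
  IsPrimeElem p ∧ ∀ S : Set L, sInf S = p → p ∈ S

/-- for a prime `p`, the completely prime filter `{x | x ≰ p}` is an exact
filter if and only if `p` is a covered prime. -/
theorem exactFilter_compl_iff_covered {L : Type*} [Order.Frame L] (p : L)
    (hp : IsPrimeElem p) :
    IsExactFilter {x : L | ¬ x ≤ p} ↔ IsCoveredPrime p := by
  constructor
  · rintro ⟨hF, hex⟩
    refine ⟨hp, fun S hS => ?_⟩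
    by_contra hpS
    have hSne : S.Nonempty := by
      rcases S.eq_empty_or_nonempty with h | h
      · subst h; rw [sInf_empty] at hS; exact absurd hS.symm hp.1
      · exact h
    have hps : ∀ s ∈ S, p ≤ s := fun s hs => hS ▸ sInf_le hs
    have hsnp : ∀ s ∈ S, ¬ s ≤ p := fun s hs hle =>
      hpS ((le_antisymm hle (hps s hs)) ▸ hs)
    -- the auxiliary functions
    set f : L → L := fun y => sInf ((fun x => x ⊔ y) '' S) with hf
    set g : L → L := fun y => f y ⇨ (p ⊔ y) with hg
    have hpf : ∀ y, p ≤ f y := by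
      intro y
      apply le_sInf
      rintro b ⟨s, hs, rfl⟩
      exact (hps s hs).trans le_sup_left
    have hpg : ∀ y, p ≤ g y := fun y => le_himp_iff.2 (inf_le_left.trans le_sup_left)
    have hgnp : ∀ y, ¬ g y ≤ p := by
      intro y hgy
      have hpyg : p ⊔ y ≤ g y := le_himp_iff.2 inf_le_left
      have hyp : y ≤ p := (le_sup_right.trans hpyg).trans hgy
      have hfy : f y ≤ p := by
        rw [← hS]
        apply le_sInf
        intro s hs
        have h1 : f y ≤ s ⊔ y := sInf_le ⟨s, hs, rfl⟩
        rwa [sup_eq_left.2 (hyp.trans (hps s hs))] at h1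
      have htop : (⊤ : L) ≤ g y :=
        le_himp_iff.2 (by simpa using hfy.trans le_sup_left)
      exact hp.1 (top_le_iff.mp (htop.trans hgy))
    -- the auxiliary family
    set T : Set L := {t | ∃ s ∈ S, ∃ y : L, t = s ⊓ g y} with hT
    have hTF : T ⊆ {x : L | ¬ x ≤ p} := by
      rintro t ⟨s, hs, y, rfl⟩ htp
      rcases hp.2 s (g y) htp with h | h
      · exact hsnp s hs h
      · exact hgnp y h
    have hTinf : sInf T = p := by
      apply le_antisymm
      · rw [← hS]
        apply le_sInf
        intro s hs
        exact (sInf_le (show s ⊓ g ⊥ ∈ T from ⟨s, hs, ⊥, rfl⟩)).trans inf_le_left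
      · apply le_sInf
        rintro t ⟨s, hs, y, rfl⟩
        exact le_inf (hps s hs) (hpg y)
    have hTex : ExactInfSet T := by
      intro u
      rw [hTinf]
      apply le_antisymm
      · apply le_sInf
        rintro b ⟨t, ⟨s, hs, y, rfl⟩, rfl⟩
        exact sup_le_sup_right (le_inf (hps s hs) (hpg y)) u
      · have h1 : sInf ((fun x => x ⊔ u) '' T) ≤ f u := by
          apply le_sInf
          rintro b ⟨s, hs, rfl⟩
          exact (sInf_le (Set.mem_image_of_mem _ (show s ⊓ g u ∈ T from ⟨s, hs, u, rfl⟩))).trans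
            (sup_le_sup_right inf_le_left u)
        have h2 : sInf ((fun x => x ⊔ u) '' T) ≤ g u ⊔ u := by
          obtain ⟨s₀, hs₀⟩ := hSne
          exact (sInf_le (Set.mem_image_of_mem _ (show s₀ ⊓ g u ∈ T from ⟨s₀, hs₀, u, rfl⟩))).trans
            (sup_le_sup_right inf_le_right u)
        have h3 : f u ⊓ (g u ⊔ u) ≤ p ⊔ u := by
          rw [inf_sup_left]
          apply sup_le
          · calc f u ⊓ g u = g u ⊓ f u := inf_comm ..
              _ ≤ p ⊔ u := himp_inf_le
          · exact inf_le_right.trans le_sup_right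
        exact (le_inf h1 h2).trans h3
    have hmem := hex T hTF hTex
    rw [hTinf] at hmem
    exact hmem le_rfl
  · rintro ⟨_, hcov⟩
    refine ⟨⟨?_, ?_, ?_⟩, ?_⟩
    · exact fun h => hp.1 (top_le_iff.mp h)
    · exact fun x y hx hxy hyp => hx (hxy.trans hyp)
    · intro x y hx hy hxy
      rcases hp.2 x y hxy with h | h
      · exact hx h
      · exact hy h
    · intro S hSF hSe hinf
      have h1 := hSe p
      rw [sup_eq_right.2 hinf] at h1
      obtain ⟨s, hs, hsp⟩ := hcov _ h1.symm
      exact hSF hs (sup_eq_right.mp hsp)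
end

section
/- Let L be a frame and p ∈ L a prime element. Then p is a maximal prime (i.e., the only elements above p are p and ⊤) if and only if the filter {x ∈ L : x ≰ p} is a regular filter, i.e., an intersection of filters of the form {x ∈ L : x ⊔ a = ⊤} with a ∈ L. -/
/-- A regular filter: an intersection of filters of the form `{x | x ⊔ a = ⊤}`. -/
def IsRegularFilter {L : Type*} [Order.Frame L] (F : Set L) : Prop :=
  ∃ A : Set L, F = ⋂ a ∈ A, {x : L | x ⊔ a = ⊤}

/-- a prime `p` of a frame is a maximal prime (the only elements above `p`
are `p` and `⊤`) if and only if the filter `{x | x ≰ p}` is regular. -/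
theorem maximal_prime_iff_regular {L : Type*} [Order.Frame L] (p : L)
    (hp : IsPrimeElem p) :
    (∀ x : L, p ≤ x → x = p ∨ x = ⊤) ↔ IsRegularFilter {x : L | ¬ x ≤ p} := by
  constructor
  · intro hmax
    refine ⟨{p}, ?_⟩
    ext x
    simp only [Set.mem_iInter, Set.mem_singleton_iff, Set.mem_setOf_eq]
    constructor
    · intro hx a ha
      rw [ha]
      rcases hmax (x ⊔ p) le_sup_right with h | h
      · exact absurd (le_sup_left.trans h.le) hx
      · exact h
    · intro h hxp
      have := h p rfl
      rw [sup_eq_right.mpr hxp] at this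
      exact hp.1 this
  · rintro ⟨A, hA⟩ x hpx
    by_cases hx : x ≤ p
    · exact Or.inl (le_antisymm hx hpx)
    right
    have hxF : ∀ a ∈ A, x ⊔ a = ⊤ := by
      have : x ∈ ({x : L | ¬ x ≤ p} : Set L) := hx
      rw [hA] at this
      simpa using this
    -- p is not in the filter, so some a ∈ A has p ⊔ a ≠ ⊤
    have hpF : ∃ a ∈ A, p ⊔ a ≠ ⊤ := by
      by_contra h
      push_neg at h
      have : p ∈ ({x : L | ¬ x ≤ p} : Set L) := by
        rw [hA]; simpa using h
      exact this le_rfl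
    obtain ⟨a, haA, hpa⟩ := hpF
    by_cases hap : a ≤ p
    · -- a ≤ p ≤ x, and x ⊔ a = ⊤, so x = ⊤
      have := hxF a haA
      rwa [sup_eq_left.mpr (hap.trans hpx)] at this
    · -- p ⊔ a ≰ p, so p ⊔ a is in the filter, hence (p ⊔ a) ⊔ a = ⊤, contradiction
      exfalso
      have hmem : (p ⊔ a) ∈ ({x : L | ¬ x ≤ p} : Set L) := fun h =>
        hap (le_sup_right.trans h)
      rw [hA] at hmem
      simp only [Set.mem_iInter, Set.mem_setOf_eq] at hmem
      have := hmem a haA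
      rw [sup_assoc, sup_idem] at this
      exact hpa this
end

section
/- A T0 topological space X is T_D if and only if for every point x ∈ X the neighborhood filter N(x) = {U ∈ Opens(X) : x ∈ U} is an exact filter of the frame Opens(X), i.e., is closed under exact meets. -/
open TopologicalSpace

/-- A space is `T_D` if every point is the difference of two open sets. -/
def IsTD (X : Type*) [TopologicalSpace X] : Prop :=
  ∀ x : X, ∃ U V : Opens X, (U : Set X) \ (V : Set X) = {x}

/-- The underlying set of `sInf` of a family of opens is the interior of the intersection. -/
theorem opens_coe_sInf {X : Type*} [TopologicalSpace X] (S : Set (Opens X)) :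
    ((sInf S : Opens X) : Set X) = interior (⋂ U ∈ S, (U : Set X)) := by
  apply subset_antisymm
  · apply interior_maximal _ (sInf S).isOpen
    exact Set.subset_iInter₂ fun U hU => SetLike.coe_subset_coe.2 (sInf_le hU)
  · have : Opens.interior (⋂ U ∈ S, (U : Set X)) ≤ sInf S := by
      apply le_sInf
      intro U hU
      show interior (⋂ U ∈ S, (U : Set X)) ⊆ (U : Set X)
      exact interior_subset.trans (Set.iInter₂_subset U hU)
    exact this

/-- a `T₀` space is `T_D` if and only if every neighborhood filter
`N(x) = {U ∈ Opens X | x ∈ U}` is an exact filter of the frame of opens. -/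
theorem td_iff_neighborhood_filters_exact {X : Type*} [TopologicalSpace X] [T0Space X] :
    IsTD X ↔ ∀ x : X, IsExactFilter {U : Opens X | x ∈ U} := by
  constructor
  · intro hTD x
    refine ⟨⟨trivial, fun U V hU hUV => hUV hU, fun U V hU hV => ⟨hU, hV⟩⟩, ?_⟩
    intro S hS hexact
    obtain ⟨U, V, hUV⟩ := hTD x
    have hx : x ∈ (U : Set X) \ (V : Set X) := hUV ▸ rfl
    have hU_le : ∀ W ∈ S, U ≤ W ⊔ V := by
      intro W hW
      intro y hy
      by_cases hyV : y ∈ (V : Set X)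
      · exact Or.inr hyV
      · have : y ∈ ({x} : Set X) := hUV ▸ ⟨hy, hyV⟩
        exact Or.inl (this ▸ hS hW)
    have hle : U ≤ sInf S ⊔ V := by
      rw [hexact V]
      exact le_sInf fun W hW => by
        obtain ⟨W', hW', rfl⟩ := hW
        exact hU_le W' hW'
    rcases hle hx.1 with h | h
    · exact h
    · exact absurd h hx.2
  · intro h x
    set C : Opens X := ⟨(closure {x})ᶜ, isClosed_closure.isOpen_compl⟩ with hC
    set S : Set (Opens X) := (fun W : Opens X => W ⊔ C) '' {W : Opens X | x ∈ W} with hSdef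
    -- key set computation
    have key : ∀ z : Opens X, (⋂ U ∈ (fun W : Opens X => W ⊔ z) '' S, (U : Set X)) =
        ({x} ∪ (C : Set X)) ∪ (z : Set X) := by
      intro z
      apply subset_antisymm
      · intro y hy
        by_cases hyC : y ∈ (C : Set X)
        · exact Or.inl (Or.inr hyC)
        by_cases hyz : y ∈ (z : Set X)
        · exact Or.inr hyz
        -- y ∈ closure {x} and y belongs to every open nbhd of x
        have hycl : y ∈ closure ({x} : Set X) := not_not.1 hyC
        have hxcl : x ∈ closure ({y} : Set X) := by
          rw [mem_closure_iff]
          intro o ho hxo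
          have : y ∈ ((⟨o, ho⟩ : Opens X) ⊔ C) ⊔ z := by
            apply Set.mem_iInter₂.1 hy
            exact ⟨⟨o, ho⟩ ⊔ C, ⟨⟨o, ho⟩, hxo, rfl⟩, rfl⟩
          rcases this with (h' | h') | h'
          · exact ⟨y, h', rfl⟩
          · exact absurd h' hyC
          · exact absurd h' hyz
        have : x = y := (inseparable_iff_mem_closure.2 ⟨hxcl, hycl⟩).eq
        exact Or.inl (Or.inl (this ▸ rfl))
      · intro y hy
        apply Set.mem_iInter₂.2
        rintro U ⟨U', ⟨W, hW, rfl⟩, rfl⟩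
        rcases hy with (rfl | hyC) | hyz
        · exact Or.inl (Or.inl hW)
        · exact Or.inl (Or.inr hyC)
        · exact Or.inr hyz
    have key0 : (⋂ U ∈ S, (U : Set X)) = {x} ∪ (C : Set X) := by
      have := key ⊥
      have himg : (fun W : Opens X => W ⊔ (⊥ : Opens X)) '' S = S := by
        simp [Set.image_congr' (fun W => sup_bot_eq W), Set.image_id]
      rw [himg] at this
      simpa using this
    have hSsub : S ⊆ {U : Opens X | x ∈ U} := by
      rintro U ⟨W, hW, rfl⟩
      exact Or.inl hW
    have hxC : x ∉ (C : Set X) := fun hc => hc (subset_closure rfl)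
    have hexact : ExactInfSet S := by
      intro z
      apply SetLike.coe_injective
      rw [Opens.coe_sup, opens_coe_sInf, opens_coe_sInf, key z, key0]
      by_cases hxz : x ∈ (z : Set X)
      · have : ({x} ∪ (C : Set X)) ∪ (z : Set X) = (C : Set X) ∪ (z : Set X) := by
          apply subset_antisymm
          · rintro y ((rfl | hyC) | hyz)
            · exact Or.inr hxz
            · exact Or.inl hyC
            · exact Or.inr hyz
          · exact Set.union_subset_union_left _ Set.subset_union_right
        rw [this, (C.isOpen.union z.isOpen).interior_eq]
        apply subset_antisymm
        · apply Set.union_subset _ Set.subset_union_right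
          intro y hy
          rcases interior_subset hy with rfl | hyC
          · exact Or.inr hxz
          · exact Or.inl hyC
        · apply Set.union_subset _ Set.subset_union_right
          exact (interior_maximal Set.subset_union_right C.isOpen).trans
            Set.subset_union_left
      · have hzC : (z : Set X) ⊆ (C : Set X) := by
          intro y hyz
          by_contra hyC
          have hycl : y ∈ closure ({x} : Set X) := not_not.1 hyC
          exact hxz (mem_closure_iff.1 hycl z z.isOpen hyz |>.elim
            (fun w hw => hw.2 ▸ hw.1))
        have : ({x} ∪ (C : Set X)) ∪ (z : Set X) = {x} ∪ (C : Set X) := by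
          rw [Set.union_assoc, Set.union_eq_self_of_subset_right hzC]
        rw [this]
        apply subset_antisymm
        · exact Set.union_subset subset_rfl
            (le_trans hzC (interior_maximal Set.subset_union_right C.isOpen))
        · exact Set.subset_union_left
    have hmem : x ∈ sInf S := (h x).2 S hSsub hexact
    have hmem' : x ∈ interior ({x} ∪ (C : Set X)) := by
      have := hmem
      rwa [← SetLike.mem_coe, opens_coe_sInf, key0] at this
    refine ⟨⟨interior ({x} ∪ (C : Set X)), isOpen_interior⟩, C, ?_⟩
    apply subset_antisymm
    · rintro y ⟨hy, hyC⟩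
      have : y ∈ ({x} ∪ (C : Set X)) := interior_subset hy
      rcases this with h' | h'
      · exact h'
      · exact absurd h' hyC
    · rintro y rfl
      exact ⟨hmem', hxC⟩
end

section
/- A T0 topological space X is T1 if and only if for every point x ∈ X the neighborhood filter N(x) = {U ∈ Opens(X) : x ∈ U} is a regular filter of Opens(X), i.e., an intersection of filters of the form {U ∈ Opens(X) : U ∪ V = X} with V open. -/
open TopologicalSpace

/-- a `T₀` space is `T₁` if and only if every neighborhood filter
`N(x) = {U ∈ Opens X | x ∈ U}` is a regular filter of the frame of opens. -/
theorem t1_iff_neighborhood_filters_regular {X : Type*} [TopologicalSpace X] [T0Space X] :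
    T1Space X ↔ ∀ x : X, IsRegularFilter {U : Opens X | x ∈ U} := by
  constructor
  · intro h x
    refine ⟨{⟨{x}ᶜ, isOpen_compl_singleton⟩}, ?_⟩
    ext U
    simp only [Set.mem_iInter, Set.mem_singleton_iff, forall_eq, Set.mem_setOf_eq]
    constructor
    · intro hx
      apply Opens.ext
      simp only [Opens.coe_sup, Opens.coe_top]
      rw [Set.eq_univ_iff_forall]
      intro y
      by_cases hy : y = x
      · exact Or.inl (hy ▸ hx)
      · exact Or.inr hy
    · intro hU
      have : x ∈ (U ⊔ ⟨{x}ᶜ, isOpen_compl_singleton⟩ : Opens X) := hU ▸ trivial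
      rcases this with h1 | h2
      · exact h1
      · exact absurd rfl h2
  · intro h
    rw [t1Space_iff_specializes_imp_eq]
    intro x y hxy
    obtain ⟨A, hA⟩ := h x
    -- show y ⤳ x, i.e. y is in every open set containing x
    have hyx : y ⤳ x := by
      rw [specializes_iff_forall_open]
      intro s hs hxs
      by_contra hys
      set U : Opens X := ⟨s, hs⟩ with hUdef
      have hU : U ∈ ⋂ a ∈ A, {V : Opens X | V ⊔ a = ⊤} := hA ▸ hxs
      -- every a ∈ A contains y, hence x, hence a ∈ N(x), hence a = ⊤
      have htop : ∀ a ∈ A, a = ⊤ := by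
        intro a ha
        have hUa : U ⊔ a = ⊤ := Set.mem_iInter₂.mp hU a ha
        have hya : y ∈ a := by
          have : y ∈ (U ⊔ a : Opens X) := hUa ▸ trivial
          rcases this with h1 | h2
          · exact absurd h1 hys
          · exact h2
        have hxa : x ∈ a := (specializes_iff_forall_open.mp hxy) a a.2 hya
        have haN : a ∈ ⋂ a' ∈ A, {V : Opens X | V ⊔ a' = ⊤} := hA ▸ hxa
        have : a ⊔ a = ⊤ := Set.mem_iInter₂.mp haN a ha
        simpa using this
      have hbot : (⊥ : Opens X) ∈ {U : Opens X | x ∈ U} := by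
        rw [hA]
        refine Set.mem_iInter₂.mpr fun a ha => ?_
        simp [htop a ha]
      exact hbot
    exact (hxy.antisymm hyx).eq
end

section
/- Let f : L → M be a surjective frame homomorphism such that f preserves exact meets, i.e., f(⨅_i x_i) = ⨅_i f(x_i) for every family (x_i) with exact infimum. Then f is exact: for every family (x_i) in L with exact infimum, the family (f(x_i)) has exact infimum in M. -/
/-- a surjective frame homomorphism preserving exact meets is exact:
images of families with exact infimum have exact infimum. -/
theorem surjective_preserving_exact_is_exact {L M : Type*} [Order.Frame L] [Order.Frame M]
    (f : FrameHom L M) (hsurj : Function.Surjective f)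
    (hpres : ∀ S : Set L, ExactInfSet S → f (sInf S) = sInf (f '' S)) :
    ∀ S : Set L, ExactInfSet S → ExactInfSet (f '' S) := by
  intro S hS z
  obtain ⟨w, rfl⟩ := hsurj z
  -- the shifted family is exact
  have hT : ExactInfSet ((fun x => x ⊔ w) '' S) := by
    intro u
    have h1 : sInf ((fun x => x ⊔ w) '' S) = sInf S ⊔ w := (hS w).symm
    rw [h1, sup_assoc, hS (w ⊔ u), Set.image_image]
    congr 1
    ext y
    simp [sup_assoc]
  have key : f (sInf ((fun x => x ⊔ w) '' S)) = sInf (f '' ((fun x => x ⊔ w) '' S)) :=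
    hpres _ hT
  have h1 : sInf ((fun x => x ⊔ w) '' S) = sInf S ⊔ w := (hS w).symm
  calc sInf (f '' S) ⊔ f w
      = f (sInf S) ⊔ f w := by rw [hpres S hS]
    _ = f (sInf S ⊔ w) := (map_sup f _ _).symm
    _ = sInf (f '' ((fun x => x ⊔ w) '' S)) := by rw [← h1, key]
    _ = sInf ((fun y => y ⊔ f w) '' (f '' S)) := by
        rw [Set.image_image, Set.image_image]
        congr 1
        ext y
        simp [map_sup]
end

section
/- Let f : L → M be a frame homomorphism with right adjoint f_*, suppose M is T_D-spatial (every element of M is the infimum of the covered primes above it), and suppose f_*(p) is a covered prime of L whenever p is a covered prime of M. Then f is exact: for every family (x_i) in L with exact infimum, the family (f(x_i)) has exact infimum in M and ⨅_i f(x_i) = f(⨅_i x_i). -/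
/-- A frame is `T_D`-spatial if every element is the infimum of the covered primes above it. -/
def IsTDSpatial (L : Type*) [Order.Frame L] : Prop :=
  ∀ b : L, b = sInf {p : L | IsCoveredPrime p ∧ b ≤ p}

/-- a `T_D` frame homomorphism into a `T_D`-spatial frame is exact. -/
theorem td_morphism_is_exact {L M : Type*} [Order.Frame L] [Order.Frame M]
    (f : FrameHom L M) (g : M → L) (adj : ∀ (a : L) (b : M), f a ≤ b ↔ a ≤ g b)
    (hspat : IsTDSpatial M)
    (hcov : ∀ p : M, IsCoveredPrime p → IsCoveredPrime (g p)) :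
    ∀ S : Set L, ExactInfSet S → ExactInfSet (f '' S) ∧ f (sInf S) = sInf (f '' S) := by
  intro S hS
  have key : ∀ q : L, IsCoveredPrime q → sInf S ≤ q → ∃ x ∈ S, x ≤ q := by
    intro q hq hle
    have h1 := hS q
    rw [sup_eq_right.mpr hle] at h1
    obtain ⟨x, hxS, hxq⟩ := hq.2 _ h1.symm
    exact ⟨x, hxS, le_trans le_sup_left hxq.le⟩
  have heq : f (sInf S) = sInf (f '' S) := by
    apply le_antisymm
    · exact le_sInf (by rintro y ⟨x, hxS, rfl⟩; exact OrderHomClass.mono f (sInf_le hxS))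
    · conv_rhs => rw [hspat (f (sInf S))]
      refine le_sInf ?_
      rintro p ⟨hp, hfp⟩
      obtain ⟨x, hxS, hxg⟩ := key (g p) (hcov p hp) ((adj _ _).mp hfp)
      exact le_trans (sInf_le (Set.mem_image_of_mem f hxS)) ((adj _ _).mpr hxg)
  refine ⟨?_, heq⟩
  intro z
  apply le_antisymm
  · refine le_sInf ?_
    rintro y ⟨w, ⟨x, hxS, rfl⟩, rfl⟩
    exact sup_le_sup_right (sInf_le (Set.mem_image_of_mem f hxS)) z
  · conv_rhs => rw [hspat (sInf (f '' S) ⊔ z)]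
    refine le_sInf ?_
    rintro p ⟨hp, hle⟩
    have hz : z ≤ p := le_trans le_sup_right hle
    have hf : f (sInf S) ≤ p := by rw [heq]; exact le_trans le_sup_left hle
    obtain ⟨x, hxS, hxg⟩ := key (g p) (hcov p hp) ((adj _ _).mp hf)
    exact le_trans (sInf_le (Set.mem_image_of_mem _ (Set.mem_image_of_mem f hxS))) (sup_le ((adj _ _).mpr hxg) hz)
end

section
/- A frame L is subfit if and only if every exact filter of L is regular. -/
/-- A frame is subfit if `x ≰ y` is witnessed by some `u` with `x ⊔ u = ⊤ ≠ y ⊔ u`. -/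
def IsSubfit (L : Type*) [Order.Frame L] : Prop :=
  ∀ x y : L, ¬ x ≤ y → ∃ u : L, x ⊔ u = ⊤ ∧ y ⊔ u ≠ ⊤

/-- a frame is subfit if and only if every exact filter is regular. -/
theorem subfit_iff_exact_filters_regular {L : Type*} [Order.Frame L] :
    IsSubfit L ↔ ∀ F : Set L, IsExactFilter F → IsRegularFilter F := by
  constructor
  · intro hsub F hF
    obtain ⟨⟨htop, hup, hmeet⟩, hexact⟩ := hF
    refine ⟨{a | ∀ x ∈ F, x ⊔ a = ⊤}, ?_⟩
    ext y
    simp only [Set.mem_iInter, Set.mem_setOf_eq]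
    constructor
    · intro hy a ha
      exact ha y hy
    · intro P
      have P' : ∀ b : L, (∀ x ∈ F, x ⊔ (y ⊔ b) = ⊤) → y ⊔ b = ⊤ := by
        intro b h
        have := P (y ⊔ b) h
        rwa [← sup_assoc, sup_idem] at this
      set S : Set L := (fun x => x ⊔ y) '' F with hS
      have hSF : S ⊆ F := by
        rintro _ ⟨x, hx, rfl⟩
        exact hup x _ hx le_sup_left
      have hylb : y ≤ sInf S := le_sInf (by rintro _ ⟨x, hx, rfl⟩; exact le_sup_right)
      -- key inequality, proved by subfitness
      have hle : ∀ z : L, sInf ((fun s => s ⊔ z) '' S) ≤ y ⊔ z := by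
        intro z
        by_contra h
        obtain ⟨u, hu1, hu2⟩ := hsub _ _ h
        apply hu2
        have hmem : ∀ x ∈ F, x ⊔ (y ⊔ (z ⊔ u)) = ⊤ := by
          intro x hx
          have h1 : (x ⊔ y) ⊔ z ∈ (fun s => s ⊔ z) '' S :=
            ⟨x ⊔ y, ⟨x, hx, rfl⟩, rfl⟩
          have h2 : (⊤ : L) ≤ ((x ⊔ y) ⊔ z) ⊔ u := by
            rw [← hu1]
            exact sup_le_sup_right (sInf_le h1) u
          have h3 : ((x ⊔ y) ⊔ z) ⊔ u = ⊤ := top_le_iff.mp h2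
          calc x ⊔ (y ⊔ (z ⊔ u)) = ((x ⊔ y) ⊔ z) ⊔ u := by
                rw [sup_assoc, sup_assoc]
            _ = ⊤ := h3
        have := P' (z ⊔ u) hmem
        rwa [← sup_assoc] at this
      -- sInf S = y
      have himg : (fun s => s ⊔ y) '' S = S := by
        have heq : Set.EqOn (fun s => s ⊔ y) id S := by
          rintro _ ⟨x, hx, rfl⟩
          simp only [id_eq]
          rw [sup_assoc, sup_idem]
        rw [Set.image_congr heq, Set.image_id]
      have hSy : sInf S ≤ y := by
        have := hle y
        rw [himg] at this
        simpa using this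
      have hSeq : sInf S = y := le_antisymm hSy hylb
      -- S has exact infimum
      have hES : ExactInfSet S := by
        intro z
        refine le_antisymm (le_sInf ?_) ?_
        · rintro _ ⟨s, hs, rfl⟩
          exact sup_le_sup_right (sInf_le hs) z
        · rw [hSeq]
          exact hle z
      exact hup (sInf S) y (hexact S hSF hES) hSy
  · intro h x y hxy
    have hIci : IsExactFilter (Set.Ici x) := by
      refine ⟨⟨le_top, fun a b ha hab => le_trans ha hab,
        fun a b ha hb => le_inf ha hb⟩, fun S hS _ => le_sInf fun s hs => hS hs⟩
    obtain ⟨A, hA⟩ := h _ hIci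
    have hx : x ∈ Set.Ici x := le_refl x
    rw [hA] at hx
    simp only [Set.mem_iInter, Set.mem_setOf_eq] at hx
    have hy : y ∉ Set.Ici x := hxy
    rw [hA] at hy
    simp only [Set.mem_iInter, Set.mem_setOf_eq, not_forall] at hy
    obtain ⟨a, ha, hya⟩ := hy
    exact ⟨a, hx a ha, hya⟩
end

section
/- Let L be a subfit frame. Then every sublocale of L is complemented in the lattice of sublocales (i.e., for every sublocale S there is a sublocale T with S ∩ T = {⊤} and every element of L an infimum of a subset of S ∪ T) if and only if every strongly exact filter of L is exact. -/
/-- A subset of a frame has strongly exact infimum. -/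
def StronglyExactInfSet {L : Type*} [Order.Frame L] (S : Set L) : Prop :=
  ∀ y : L, (∀ s ∈ S, s ⇨ y = y) → sInf S ⇨ y = y

/-- A strongly exact filter: a filter closed under strongly exact meets of its members. -/
def IsStronglyExactFilter {L : Type*} [Order.Frame L] (F : Set L) : Prop :=
  IsFrameFilter F ∧ ∀ S : Set L, S ⊆ F → StronglyExactInfSet S → sInf S ∈ F

/-- A sublocale of a frame: closed under all infima and under `x ⇨ -`. -/
def IsSublocale {L : Type*} [Order.Frame L] (S : Set L) : Prop :=
  (∀ T : Set L, T ⊆ S → sInf T ∈ S) ∧ ∀ x : L, ∀ s ∈ S, x ⇨ s ∈ S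

namespace SubfitAux

variable {L : Type*} [Order.Frame L]

/-- The filter of elements whose closed sublocale misses a given sublocale: `ν_V(a) = ⊤`. -/
def subF (V : Set L) : Set L := {a | ∀ v ∈ V, a ≤ v → v = ⊤}

/-- The join of closed sublocales over a filter `G`:
elements that are the infimum of the members of `G` above them. -/
def subT (G : Set L) : Set L := {t | sInf {a | a ∈ G ∧ t ≤ a} = t}

lemma subF_upward {V : Set L} : ∀ a b : L, a ∈ subF V → a ≤ b → b ∈ subF V :=
  fun _ _ ha hab v hv hle => ha v hv (hab.trans hle)

lemma subF_himp_eq {V : Set L} (hV : IsSublocale V) {a v : L}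
    (ha : a ∈ subF V) (hv : v ∈ V) : a ⇨ v = v := by
  refine le_antisymm ?_ (le_himp_iff.2 inf_le_left)
  have h1 : a ≤ (a ⇨ v) ⇨ v := le_himp_iff.2 (by rw [inf_comm]; exact himp_inf_le)
  have h2 : (a ⇨ v) ⇨ v = ⊤ := ha _ (hV.2 _ v hv) h1
  exact himp_eq_top_iff.1 h2

lemma subF_strongly_exact {V : Set L} (hV : IsSublocale V) :
    IsStronglyExactFilter (subF V) := by
  constructor
  · refine ⟨fun v _ hle => top_unique hle, subF_upward, ?_⟩
    intro a b ha hb v hv hle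
    have h1 : b ≤ a ⇨ v := le_himp_iff.2 (le_trans (le_of_eq (inf_comm b a)) hle)
    have h2 : a ⇨ v = ⊤ := hb _ (hV.2 a v hv) h1
    exact ha v hv (himp_eq_top_iff.1 h2)
  · intro A hA hSE v hv hle
    have h1 : sInf A ⇨ v = v := hSE v (fun a haA => subF_himp_eq hV (hA haA) hv)
    exact h1.symm.trans (himp_eq_top_iff.2 hle)

lemma subT_sublocale {G : Set L} (hup : ∀ a b : L, a ∈ G → a ≤ b → b ∈ G) :
    IsSublocale (subT G) := by
  constructor
  · intro M hM
    show sInf {a | a ∈ G ∧ sInf M ≤ a} = sInf M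
    refine le_antisymm (le_sInf fun m hm => ?_) (le_sInf fun a ha => ha.2)
    calc sInf {a | a ∈ G ∧ sInf M ≤ a}
        ≤ sInf {a | a ∈ G ∧ m ≤ a} :=
          sInf_le_sInf (fun a ha => ⟨ha.1, (sInf_le hm).trans ha.2⟩)
      _ = m := hM hm
  · intro c t ht
    have ht' : sInf {a | a ∈ G ∧ t ≤ a} = t := ht
    show sInf {a | a ∈ G ∧ c ⇨ t ≤ a} = c ⇨ t
    refine le_antisymm ?_ (le_sInf fun a ha => ha.2)
    have h2 : sInf {a | a ∈ G ∧ c ⇨ t ≤ a} ≤ c ⇨ sInf {b | b ∈ G ∧ t ≤ b} := by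
      rw [le_himp_iff]
      refine le_sInf ?_
      rintro b ⟨hbG, htb⟩
      refine le_himp_iff.1 (sInf_le ⟨hup b (c ⇨ b) hbG (le_himp_iff.2 inf_le_left),
        himp_le_himp_left htb⟩)
    rwa [ht'] at h2

/-- The key join lemma (subfitness): `ν_V(w) ⊓ e_V(w) ≤ w`. -/
lemma nu_inf_e_le (hL : IsSubfit L) {V : Set L} (hV : IsSublocale V) (w : L) :
    sInf {v | v ∈ V ∧ w ≤ v} ⊓ sInf {a | a ∈ subF V ∧ w ≤ a} ≤ w := by
  by_contra h
  obtain ⟨u, h1, h2⟩ := hL _ w h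
  have hnu : sInf {v | v ∈ V ∧ w ≤ v} ⊔ u = ⊤ :=
    top_unique (by rw [← h1]; exact sup_le_sup_right inf_le_left u)
  have he : sInf {a | a ∈ subF V ∧ w ≤ a} ⊔ u = ⊤ :=
    top_unique (by rw [← h1]; exact sup_le_sup_right inf_le_right u)
  have hwuF : (w ⊔ u) ∈ subF V := by
    intro v hv hle
    have h3 : sInf {v | v ∈ V ∧ w ≤ v} ≤ v := sInf_le ⟨hv, le_trans le_sup_left hle⟩
    have h4 : u ≤ v := le_trans le_sup_right hle
    exact top_unique (by rw [← hnu]; exact sup_le h3 h4)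
  have h5 : sInf {a | a ∈ subF V ∧ w ≤ a} ≤ w ⊔ u := sInf_le ⟨hwuF, le_sup_left⟩
  exact h2 (top_unique (by rw [← he]; exact sup_le (h5.trans le_rfl) le_sup_right))

end SubfitAux

open SubfitAux in
/-- for a subfit frame `L`, every sublocale of `L` is complemented in the
lattice of sublocales if and only if every strongly exact filter of `L` is exact. -/
theorem subfit_scattered_iff_se_eq_e {L : Type*} [Order.Frame L] (hL : IsSubfit L) :
    (∀ S : Set L, IsSublocale S → ∃ T : Set L, IsSublocale T ∧ S ∩ T = {⊤} ∧
      ∀ x : L, ∃ A : Set L, A ⊆ S ∪ T ∧ sInf A = x) ↔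
    (∀ F : Set L, IsStronglyExactFilter F → IsExactFilter F) := by
  constructor
  · -- complemented sublocales ⟹ strongly exact filters are exact
    intro hcomp F hF
    refine ⟨hF.1, ?_⟩
    intro B hBF hBex
    refine hF.2 B hBF ?_
    intro y hy
    -- the fitted sublocale of B
    set V : Set L := {v | ∀ b ∈ B, b ⇨ v = v} with hVdef
    have hV : IsSublocale V := by
      constructor
      · intro M hM b hb
        refine le_antisymm (le_sInf fun v hv => ?_) (le_himp_iff.2 inf_le_left)
        exact le_trans (himp_le_himp_left (sInf_le hv)) (le_of_eq (hM hv b hb))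
      · intro c v hv b hb
        calc b ⇨ (c ⇨ v) = (b ⊓ c) ⇨ v := himp_himp b c v
          _ = (c ⊓ b) ⇨ v := by rw [inf_comm]
          _ = c ⇨ (b ⇨ v) := (himp_himp c b v).symm
          _ = c ⇨ v := by rw [hv b hb]
    obtain ⟨T, hT, hVT, hjoin⟩ := hcomp V hV
    -- every element above some b ∈ B lies in T
    have hstep1 : ∀ b ∈ B, ∀ w : L, b ≤ w → w ∈ T := by
      intro b hb w hbw
      obtain ⟨A, hAsub, hAinf⟩ := hjoin w
      have hvV : sInf (A ∩ V) ∈ V := hV.1 _ Set.inter_subset_right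
      have htT : sInf (A ∩ T) ∈ T := hT.1 _ Set.inter_subset_right
      have hA' : A ∩ V ∪ A ∩ T = A := by
        rw [← Set.inter_union_distrib_left]; exact Set.inter_eq_left.2 hAsub
      have hw : sInf (A ∩ V) ⊓ sInf (A ∩ T) = w := by rw [← sInf_union, hA', hAinf]
      have hcalc : sInf (A ∩ T) ⇨ w = sInf (A ∩ T) ⇨ sInf (A ∩ V) := by
        rw [← hw, himp_inf_distrib, himp_self, inf_top_eq]
      have h1 : sInf (A ∩ T) ⇨ w ∈ V := by
        rw [hcalc]; exact hV.2 _ _ hvV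
      have h2 : b ≤ sInf (A ∩ T) ⇨ w := hbw.trans (le_himp_iff.2 inf_le_left)
      have h3 : sInf (A ∩ T) ⇨ w = ⊤ := (h1 b hb).symm.trans (himp_eq_top_iff.2 h2)
      have h4 : w = sInf (A ∩ T) :=
        le_antisymm (by rw [← hw]; exact inf_le_right) (himp_eq_top_iff.1 h3)
      rw [h4]; exact htT
    -- m ⊔ y ∈ T by exactness
    have hcT : sInf B ⊔ y ∈ T := by
      rw [hBex y]
      refine hT.1 _ ?_
      rintro p ⟨b, hb, rfl⟩
      exact hstep1 b hb (b ⊔ y) le_sup_left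
    have hyV : y ∈ V := fun b hb => hy b hb
    have hy2 : (sInf B ⇨ y) ⊓ (sInf B ⊔ y) = y := by
      refine le_antisymm ?_ (le_inf (le_himp_iff.2 inf_le_left) le_sup_right)
      rw [inf_sup_left]
      exact sup_le (himp_inf_le) inf_le_right
    have hoyV : (sInf B ⇨ y) ⇨ y ∈ V := hV.2 _ y hyV
    have hoyT : (sInf B ⇨ y) ⇨ y ∈ T := by
      have hcalc2 : (sInf B ⇨ y) ⇨ y = (sInf B ⇨ y) ⇨ (sInf B ⊔ y) := by
        rw [← top_inf_eq ((sInf B ⇨ y) ⇨ (sInf B ⊔ y)), ← himp_self (a := sInf B ⇨ y),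
          ← himp_inf_distrib, hy2]
      rw [hcalc2]; exact hT.2 _ _ hcT
    have hmem : (sInf B ⇨ y) ⇨ y ∈ ({⊤} : Set L) := hVT ▸ ⟨hoyV, hoyT⟩
    have h5 : sInf B ⇨ y ≤ y := himp_eq_top_iff.1 (Set.mem_singleton_iff.1 hmem)
    exact le_antisymm h5 (le_himp_iff.2 inf_le_left)
  · -- strongly exact filters exact ⟹ sublocales complemented
    intro hfil S hS
    refine ⟨subT (subF S), subT_sublocale subF_upward, ?_, ?_⟩
    · -- the meet S ∩ T = {⊤}
      ext x
      simp only [Set.mem_inter_iff, Set.mem_singleton_iff]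
      constructor
      · rintro ⟨hxS, hxT⟩
        by_contra hxtop
        have hxT' : sInf {a | a ∈ subF S ∧ x ≤ a} = x := hxT
        -- the family of sublocales containing x in which x is a c-join point
        set C : Set (Set L) :=
          {V | IsSublocale V ∧ x ∈ V ∧ sInf {a | a ∈ subF V ∧ x ≤ a} = x} with hCdef
        have hSC : S ∈ C := ⟨hS, hxS, hxT'⟩
        set W : Set L := {w | ∀ V ∈ C, w ∈ V} with hWdef
        have hWsub : IsSublocale W :=
          ⟨fun M hM V hV => hV.1.1 M (fun m hm => hM hm V hV),
           fun c w hw V hV => hV.1.2 c w (hw V hV)⟩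
        have hxW : x ∈ W := fun V hV => hV.2.1
        have hleast : ∀ V ∈ C, W ⊆ V := fun V hV w hw => hw V hV
        have hFmono : ∀ V ∈ C, subF V ⊆ subF W :=
          fun V hV a ha w hwW hle => ha w (hwW V hV) hle
        have hWinf : sInf {a | a ∈ subF W ∧ x ≤ a} = x := by
          refine le_antisymm ?_ (le_sInf fun a ha => ha.2)
          calc sInf {a | a ∈ subF W ∧ x ≤ a}
              ≤ sInf {a | a ∈ subF S ∧ x ≤ a} :=
                sInf_le_sInf (fun a ha => ⟨hFmono S hSC ha.1, ha.2⟩)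
            _ = x := hxT'
        have hWC : W ∈ C := ⟨hWsub, hxW, hWinf⟩
        -- W ∩ subT (subF W) is also in the family, hence W ⊆ subT (subF W)
        have hW'C : W ∩ subT (subF W) ∈ C := by
          refine ⟨?_, ⟨hxW, hWinf⟩, ?_⟩
          · exact ⟨fun M hM => ⟨hWsub.1 M (fun m hm => (hM hm).1),
              (subT_sublocale subF_upward).1 M (fun m hm => (hM hm).2)⟩,
              fun c w hw => ⟨hWsub.2 c w hw.1, (subT_sublocale subF_upward).2 c w hw.2⟩⟩
          · refine le_antisymm ?_ (le_sInf fun a ha => ha.2)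
            calc sInf {a | a ∈ subF (W ∩ subT (subF W)) ∧ x ≤ a}
                ≤ sInf {a | a ∈ subF W ∧ x ≤ a} :=
                  sInf_le_sInf (fun a ha =>
                    ⟨fun v hv hle => ha.1 v hv.1 hle, ha.2⟩)
              _ = x := hWinf
        have hWT : ∀ w ∈ W, sInf {a | a ∈ subF W ∧ w ≤ a} = w :=
          fun w hw => (hleast _ hW'C hw).2
        -- the presentation of x inside subF W is an exact meet
        have hDex : ExactInfSet {a | a ∈ subF W ∧ x ≤ a} := by
          intro z
          rw [hWinf]
          refine le_antisymm (le_sInf ?_) ?_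
          · rintro p ⟨a, ⟨haF, hxa⟩, rfl⟩
            exact sup_le_sup_right hxa z
          · have hnuW : sInf {v | v ∈ W ∧ x ⊔ z ≤ v} ∈ W := hWsub.1 _ (fun v hv => hv.1)
            have hxznu : x ⊔ z ≤ sInf {v | v ∈ W ∧ x ⊔ z ≤ v} := le_sInf fun v hv => hv.2
            have h1 : sInf ((fun b => b ⊔ z) '' {a | a ∈ subF W ∧ x ≤ a})
                ≤ sInf {v | v ∈ W ∧ x ⊔ z ≤ v} := by
              rw [← hWT _ hnuW]
              refine le_sInf ?_
              rintro a ⟨haF, hnua⟩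
              have hxa : x ≤ a := le_trans (le_trans le_sup_left hxznu) hnua
              have hza : z ≤ a := le_trans (le_trans le_sup_right hxznu) hnua
              have h6 : sInf ((fun b => b ⊔ z) '' {a | a ∈ subF W ∧ x ≤ a}) ≤ a ⊔ z :=
                sInf_le ⟨a, ⟨haF, hxa⟩, rfl⟩
              rwa [sup_eq_left.2 hza] at h6
            have h2 : sInf ((fun b => b ⊔ z) '' {a | a ∈ subF W ∧ x ≤ a})
                ≤ sInf {a | a ∈ subF W ∧ x ⊔ z ≤ a} := by
              refine le_sInf ?_
              rintro a ⟨haF, hxza⟩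
              have h6 : sInf ((fun b => b ⊔ z) '' {a | a ∈ subF W ∧ x ≤ a}) ≤ a ⊔ z :=
                sInf_le ⟨a, ⟨haF, le_trans le_sup_left hxza⟩, rfl⟩
              rwa [sup_eq_left.2 (le_trans le_sup_right hxza)] at h6
            exact le_trans (le_inf h1 h2) (nu_inf_e_le hL hWsub (x ⊔ z))
        have hxF : x ∈ subF W := by
          have h7 := (hfil (subF W) (subF_strongly_exact hWsub)).2 _
            (fun a ha => ha.1) hDex
          rwa [hWinf] at h7
        exact hxtop (hxF x hxW le_rfl)
      · rintro rfl
        refine ⟨?_, ?_⟩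
        · have h8 := hS.1 ∅ (Set.empty_subset S)
          rwa [sInf_empty] at h8
        · show sInf {a | a ∈ subF S ∧ (⊤ : L) ≤ a} = ⊤
          exact top_unique (le_sInf fun a ha => ha.2)
    · -- the join: every element is an infimum over S ∪ T
      intro w
      refine ⟨{sInf {v | v ∈ S ∧ w ≤ v}, sInf {a | a ∈ subF S ∧ w ≤ a}}, ?_, ?_⟩
      · rintro p hp
        rcases hp with rfl | hp
        · exact Or.inl (hS.1 _ (fun v hv => hv.1))
        · rw [Set.mem_singleton_iff] at hp
          subst hp
          refine Or.inr ?_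
          show sInf {a | a ∈ subF S ∧ sInf {a | a ∈ subF S ∧ w ≤ a} ≤ a}
              = sInf {a | a ∈ subF S ∧ w ≤ a}
          refine le_antisymm ?_ (le_sInf fun a ha => ha.2)
          exact sInf_le_sInf (fun a ha => ⟨ha.1, sInf_le ha⟩)
      · rw [sInf_pair]
        exact le_antisymm (nu_inf_e_le hL hS w)
          (le_inf (le_sInf fun v hv => hv.2) (le_sInf fun a ha => ha.2))
end

section
/- In a frame L, for every a ∈ L the closed sublocale 𝔠(a) = {x ∈ L : a ≤ x} and the open sublocale 𝔬(a) = {a ⇨ b : b ∈ L} are exact sublocales. -/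
/-- The surjection `ν_S` associated to a sublocale `S`. -/
def nuMap {L : Type*} [Order.Frame L] (S : Set L) (x : L) : L :=
  sInf {s ∈ S | x ≤ s}

/-- An exact sublocale: a sublocale whose surjection preserves exact meets. -/
def IsExactSublocale {L : Type*} [Order.Frame L] (S : Set L) : Prop :=
  IsSublocale S ∧ ∀ T : Set L, ExactInfSet T → sInf (nuMap S '' T) = nuMap S (sInf T)

lemma nu_closed {L : Type*} [Order.Frame L] (a x : L) :
    nuMap {x : L | a ≤ x} x = a ⊔ x := by
  apply le_antisymm
  · exact sInf_le ⟨le_sup_left, le_sup_right⟩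
  · exact le_sInf fun s hs => sup_le hs.1 hs.2

lemma nu_open {L : Type*} [Order.Frame L] (a x : L) :
    nuMap {y : L | ∃ b : L, y = a ⇨ b} x = a ⇨ x := by
  apply le_antisymm
  · exact sInf_le ⟨⟨x, rfl⟩, le_himp⟩
  · refine le_sInf ?_
    rintro s ⟨⟨b, rfl⟩, hx⟩
    exact (himp_le_himp_left hx).trans_eq himp_idem

/-- in a frame, every closed sublocale `𝔠(a) = {x | a ≤ x}` and every open
sublocale `𝔬(a) = {a ⇨ b | b ∈ L}` is an exact sublocale. -/
theorem closed_and_open_sublocales_exact {L : Type*} [Order.Frame L] (a : L) :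
    IsExactSublocale {x : L | a ≤ x} ∧
      IsExactSublocale {y : L | ∃ b : L, y = a ⇨ b} := by
  constructor
  · refine ⟨⟨fun T hT => le_sInf fun t ht => hT ht, fun x s hs => ?_⟩, fun T hT => ?_⟩
    · exact le_himp_iff.mpr (le_trans inf_le_left hs)
    · rw [nu_closed]
      have h := hT a
      have himg : (nuMap {x : L | a ≤ x} '' T) = (fun x => x ⊔ a) '' T := by
        ext y
        simp only [Set.mem_image]
        constructor
        · rintro ⟨t, ht, rfl⟩; exact ⟨t, ht, by rw [nu_closed, sup_comm]⟩
        · rintro ⟨t, ht, rfl⟩; exact ⟨t, ht, by rw [nu_closed, sup_comm]⟩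
      rw [himg, ← h, sup_comm]
  · refine ⟨⟨fun T hT => ?_, fun x s hs => ?_⟩, fun T _ => ?_⟩
    · refine ⟨sInf T, le_antisymm le_himp ?_⟩
      refine le_sInf fun t ht => ?_
      obtain ⟨b, rfl⟩ := hT ht
      exact (himp_le_himp_left (sInf_le ht)).trans_eq himp_idem
    · obtain ⟨b, rfl⟩ := hs
      exact ⟨x ⇨ b, by rw [himp_left_comm]⟩
    · rw [nu_open]
      have himg : (nuMap {y : L | ∃ b : L, y = a ⇨ b} '' T) = (fun x => a ⇨ x) '' T := by
        ext y
        simp only [Set.mem_image]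
        constructor
        · rintro ⟨t, ht, rfl⟩; exact ⟨t, ht, (nu_open a t).symm⟩
        · rintro ⟨t, ht, rfl⟩; exact ⟨t, ht, nu_open a t⟩
      rw [himg]
      apply le_antisymm
      · rw [le_himp_iff, inf_comm]
        refine le_sInf fun t ht => ?_
        calc a ⊓ sInf ((fun x => a ⇨ x) '' T) ≤ a ⊓ (a ⇨ t) :=
              inf_le_inf_left a (sInf_le ⟨t, ht, rfl⟩)
          _ ≤ t := inf_himp_le
      · exact le_sInf (by rintro y ⟨t, ht, rfl⟩; exact himp_le_himp_left (sInf_le ht))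
end

section
/- In a frame L, if p is a covered prime then the two-element sublocale 𝔟(p) = {x ⇨ p : x ∈ L} is an exact sublocale. -/
/-- if `p` is a covered prime of a frame `L`, then the two-element sublocale
`𝔟(p) = {x ⇨ p | x ∈ L}` is an exact sublocale. -/
theorem boolean_sublocale_of_covered_prime_exact {L : Type*} [Order.Frame L] (p : L)
    (hp : IsCoveredPrime p) :
    IsExactSublocale {y : L | ∃ x : L, y = x ⇨ p} := by
  obtain ⟨⟨hpt, hprime⟩, hcov⟩ := hp
  set S : Set L := {y : L | ∃ x : L, y = x ⇨ p} with hS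
  have hpS : p ∈ S := ⟨⊤, top_himp.symm⟩
  have htop : (⊤ : L) ∈ S := ⟨⊥, by simp⟩
  have hchar : ∀ s ∈ S, s = p ∨ s = ⊤ := by
    rintro s ⟨a, rfl⟩
    by_cases ha : a ≤ p
    · right; rwa [himp_eq_top_iff]
    · left
      have h1 : a ⇨ p ≤ p := by
        rcases hprime (a ⇨ p) a (by simpa using himp_inf_le) with h | h
        · exact h
        · exact absurd h ha
      exact le_antisymm h1 (le_himp_iff.mpr inf_le_left)
  have hge : ∀ s ∈ S, p ≤ s := by
    intro s hs; rcases hchar s hs with rfl | rfl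
    · exact le_rfl
    · exact le_top
  have hnu_le : ∀ x : L, x ≤ p → nuMap S x = p := by
    intro x hx
    refine le_antisymm (sInf_le ⟨hpS, hx⟩) (le_sInf ?_)
    rintro s ⟨hs, -⟩; exact hge s hs
  have hnu_nle : ∀ x : L, ¬ x ≤ p → nuMap S x = ⊤ := by
    intro x hx
    refine top_unique (le_sInf ?_)
    rintro s ⟨hs, hxs⟩
    rcases hchar s hs with rfl | rfl
    · exact absurd hxs hx
    · exact le_rfl
  constructor
  · constructor
    · intro T hT
      by_cases h : sInf T ≤ p
      · have : sInf T = p := le_antisymm h (le_sInf fun t ht => hge t (hT ht))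
        rw [this]; exact hpS
      · have : sInf T = ⊤ := by
          refine top_unique (le_sInf fun t ht => ?_)
          rcases hchar t (hT ht) with rfl | rfl
          · exact absurd (sInf_le ht) h
          · exact le_rfl
        rw [this]; exact htop
    · rintro x s ⟨a, rfl⟩
      exact ⟨x ⊓ a, by rw [himp_himp]⟩
  · intro T hT
    by_cases h : sInf T ≤ p
    · rw [hnu_le _ h]
      have hz := hT p
      have hinf : sInf ((fun x => x ⊔ p) '' T) = p := by
        rw [← hz, sup_eq_right.mpr h]
      obtain ⟨t, htT, htp⟩ := hcov _ hinf
      have htle : t ≤ p := sup_eq_right.mp htp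
      refine le_antisymm ?_ (le_sInf ?_)
      · exact le_trans (sInf_le ⟨t, htT, rfl⟩) (le_of_eq (hnu_le t htle))
      · rintro s ⟨u, huT, rfl⟩
        by_cases hu : u ≤ p
        · rw [hnu_le u hu]
        · rw [hnu_nle u hu]; exact le_top
    · rw [hnu_nle _ h]
      refine top_unique (le_sInf ?_)
      rintro s ⟨u, huT, rfl⟩
      have hu : ¬ u ≤ p := fun hu => h (le_trans (sInf_le huT) hu)
      rw [hnu_nle u hu]
end

section
/- In a frame L, if (S_j)_{j∈J} is a family of exact sublocales, then their join in the lattice of sublocales, namely the set {⨅T : T ⊆ ⋃_j S_j}, is a sublocale and is exact. -/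
lemma himp_sInf_eq {L : Type*} [Order.Frame L] (x : L) (U : Set L) :
    x ⇨ sInf U = sInf ((x ⇨ ·) '' U) :=
  eq_of_forall_le_iff fun a => by
    simp [le_himp_iff, le_sInf_iff, Set.forall_mem_image]

lemma nuMap_le_of_mem {L : Type*} [Order.Frame L] {S : Set L} {x s : L}
    (hs : s ∈ S) (hx : x ≤ s) : nuMap S x ≤ s :=
  sInf_le ⟨hs, hx⟩

lemma nuMap_mono {L : Type*} [Order.Frame L] {S : Set L} {x y : L} (hxy : x ≤ y) :
    nuMap S x ≤ nuMap S y :=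
  le_sInf fun s hs => sInf_le ⟨hs.1, hxy.trans hs.2⟩

lemma nuMap_anti {L : Type*} [Order.Frame L] {S S' : Set L} (hss : S ⊆ S') (x : L) :
    nuMap S' x ≤ nuMap S x :=
  le_sInf fun s hs => sInf_le ⟨hss hs.1, hs.2⟩

/-- the join of a family of exact sublocales, namely the set of infima of
subsets of their union, is a sublocale and is exact. -/
theorem join_of_exact_sublocales_exact {L : Type*} [Order.Frame L] {ι : Type*}
    (S : ι → Set L) (h : ∀ j : ι, IsExactSublocale (S j)) :
    IsExactSublocale {x : L | ∃ T : Set L, T ⊆ (⋃ j : ι, S j) ∧ sInf T = x} := by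
  set J : Set L := {x : L | ∃ T : Set L, T ⊆ (⋃ j : ι, S j) ∧ sInf T = x} with hJ
  have hSJ : ∀ j, S j ⊆ J := fun j t ht =>
    ⟨{t}, by simpa using Set.subset_iUnion S j ht, sInf_singleton⟩
  constructor
  · constructor
    · -- closed under infima
      intro T' hT'
      refine ⟨⋃₀ {U | U ⊆ (⋃ j : ι, S j) ∧ sInf U ∈ T'}, ?_, ?_⟩
      · intro y hy
        obtain ⟨U, hU, hyU⟩ := hy
        exact hU.1 hyU
      · apply le_antisymm
        · apply le_sInf
          intro x hx
          obtain ⟨U, hU, rfl⟩ := hT' hx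
          exact sInf_le_sInf fun u hu => ⟨U, ⟨hU, hx⟩, hu⟩
        · apply le_sInf
          intro u hu
          obtain ⟨U, ⟨hU1, hU2⟩, huU⟩ := hu
          exact (sInf_le hU2).trans (sInf_le huU)
    · -- closed under himp
      rintro x s ⟨U, hU, rfl⟩
      refine ⟨(x ⇨ ·) '' U, ?_, (himp_sInf_eq x U).symm⟩
      rintro _ ⟨u, hu, rfl⟩
      obtain ⟨j, hj⟩ := Set.mem_iUnion.mp (hU hu)
      exact Set.mem_iUnion.mpr ⟨j, (h j).1.2 x u hj⟩
  · -- exactness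
    intro T hT
    apply le_antisymm
    · -- hard direction
      apply le_sInf
      rintro s ⟨⟨U, hU, rfl⟩, hm⟩
      apply le_sInf
      intro u hu
      obtain ⟨j, hj⟩ := Set.mem_iUnion.mp (hU hu)
      have h1 : sInf (nuMap (S j) '' T) = nuMap (S j) (sInf T) := (h j).2 T hT
      have h2 : nuMap (S j) (sInf T) ≤ u := nuMap_le_of_mem hj (hm.trans (sInf_le hu))
      have h3 : sInf (nuMap J '' T) ≤ sInf (nuMap (S j) '' T) := by
        apply le_sInf
        rintro _ ⟨t, ht, rfl⟩
        exact (sInf_le (Set.mem_image_of_mem _ ht)).trans (nuMap_anti (hSJ j) t)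
      exact h3.trans (h1 ▸ h2)
    · apply le_sInf
      rintro _ ⟨t, ht, rfl⟩
      exact nuMap_mono (sInf_le ht)
end

section
/- In a frame L, if S is an exact sublocale and y ∈ L, then the sublocales S ∩ 𝔠(y) and S ∩ 𝔬(y) are exact, where 𝔠(y) = {x : y ≤ x} and 𝔬(y) = {y ⇨ b : b ∈ L}. -/
section Aux

variable {L : Type*} [Order.Frame L]

lemma nu_mem {S : Set L} (hS : IsSublocale S) (x : L) : nuMap S x ∈ S :=
  hS.1 _ (fun _ hs => hs.1)

lemma le_nu (S : Set L) (x : L) : x ≤ nuMap S x :=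
  le_sInf fun _ hs => hs.2

lemma nu_le_of_mem {S : Set L} {s x : L} (hs : s ∈ S) (hx : x ≤ s) : nuMap S x ≤ s :=
  sInf_le ⟨hs, hx⟩

lemma himp_sInf_image (y : L) (U : Set L) :
    sInf ((fun u => y ⇨ u) '' U) = y ⇨ sInf U := by
  apply le_antisymm
  · rw [le_himp_iff]
    apply le_sInf
    intro u hu
    calc sInf ((fun u => y ⇨ u) '' U) ⊓ y
        ≤ (y ⇨ u) ⊓ y := inf_le_inf_right _ (sInf_le ⟨u, hu, rfl⟩)
      _ ≤ u := himp_inf_le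
  · apply le_sInf
    rintro _ ⟨u, hu, rfl⟩
    exact himp_le_himp_left (sInf_le hu)

lemma nuClosed {S : Set L} (y x : L) :
    nuMap (S ∩ {x : L | y ≤ x}) x = nuMap S (x ⊔ y) := by
  unfold nuMap
  congr 1
  ext s
  simp only [Set.mem_setOf_eq, Set.mem_inter_iff, Set.mem_sep_iff, sup_le_iff]
  tauto

lemma nuOpen {S : Set L} (hS : IsSublocale S) (y x : L) :
    nuMap (S ∩ {x : L | ∃ b : L, x = y ⇨ b}) x = y ⇨ nuMap S x := by
  apply le_antisymm
  · exact sInf_le ⟨⟨hS.2 y _ (nu_mem hS x), ⟨nuMap S x, rfl⟩⟩,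
      le_trans (le_nu S x) le_himp⟩
  · apply le_sInf
    rintro s ⟨⟨hsS, b, rfl⟩, hxs⟩
    calc y ⇨ nuMap S x ≤ y ⇨ (y ⇨ b) := himp_le_himp_left (nu_le_of_mem hsS hxs)
      _ = y ⇨ b := by rw [himp_himp, inf_idem]

end Aux

/-- if `S` is an exact sublocale of a frame `L` and `y ∈ L`, then
`S ∩ 𝔠(y)` and `S ∩ 𝔬(y)` are exact sublocales. -/
theorem exact_sublocale_inter_closed_open {L : Type*} [Order.Frame L] (S : Set L)
    (hS : IsExactSublocale S) (y : L) :
    IsExactSublocale (S ∩ {x : L | y ≤ x}) ∧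
      IsExactSublocale (S ∩ {x : L | ∃ b : L, x = y ⇨ b}) := by
  obtain ⟨hsub, hex⟩ := hS
  constructor
  · refine ⟨⟨fun T hT => ⟨hsub.1 T (fun t ht => (hT ht).1),
      le_sInf fun t ht => (hT ht).2⟩,
      fun x s hs => ⟨hsub.2 x s hs.1, le_trans hs.2 le_himp⟩⟩, ?_⟩
    intro T hT
    have himg : nuMap (S ∩ {x : L | y ≤ x}) '' T = nuMap S '' ((fun t => t ⊔ y) '' T) := by
      rw [Set.image_image]
      ext s
      simp only [Set.mem_image]
      constructor
      · rintro ⟨t, ht, rfl⟩; exact ⟨t, ht, (nuClosed y t).symm⟩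
      · rintro ⟨t, ht, rfl⟩; exact ⟨t, ht, nuClosed y t⟩
    have hT' : ExactInfSet ((fun t => t ⊔ y) '' T) := by
      intro z
      rw [Set.image_image, ← hT y, sup_assoc, hT (y ⊔ z)]
      simp only [sup_assoc]
    rw [himg, hex _ hT', nuClosed, ← hT y]
  · have hO : IsSublocale (S ∩ {x : L | ∃ b : L, x = y ⇨ b}) := by
      constructor
      · intro T hT
        refine ⟨hsub.1 T (fun t ht => (hT ht).1), sInf T, ?_⟩
        apply le_antisymm le_himp
        apply le_sInf
        intro t ht
        obtain ⟨b, rfl⟩ := (hT ht).2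
        calc y ⇨ sInf T ≤ y ⇨ (y ⇨ b) := himp_le_himp_left (sInf_le ht)
          _ = y ⇨ b := by rw [himp_himp, inf_idem]
      · intro x s hs
        obtain ⟨hsS, b, rfl⟩ := hs
        exact ⟨hsub.2 x _ hsS, x ⇨ b, by rw [himp_himp, himp_himp, inf_comm]⟩
    refine ⟨hO, fun T hT => ?_⟩
    have himg : nuMap (S ∩ {x : L | ∃ b : L, x = y ⇨ b}) '' T
        = (fun u => y ⇨ u) '' (nuMap S '' T) := by
      rw [Set.image_image]
      ext s
      simp only [Set.mem_image]
      constructor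
      · rintro ⟨t, ht, rfl⟩; exact ⟨t, ht, (nuOpen hsub y t).symm⟩
      · rintro ⟨t, ht, rfl⟩; exact ⟨t, ht, nuOpen hsub y t⟩
    rw [himg, himp_sInf_image, hex _ hT, nuOpen hsub]
end

section
/- Let C be a complete lattice and L ⊆ C a subset closed under arbitrary suprema (computed in C) and such that every c ∈ C equals ⨅{a ∈ L : c ≤ a}. Then an element x ∈ C is completely join-prime in C (for every D ⊆ C, x ≤ ⨆D implies x ≤ d for some d ∈ D) if and only if for every A ⊆ L, x ≤ ⨆A implies x ≤ a for some a ∈ A. -/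
/-- let `C` be a complete lattice and `L ⊆ C` a subset closed under
arbitrary suprema which meet-generates `C`. Then `x ∈ C` is completely join-prime in `C`
if and only if it is inaccessible by suprema of subsets of `L`. -/
theorem completely_join_prime_iff_on_generators {C : Type*} [CompleteLattice C]
    (L : Set C) (hsup : ∀ A : Set C, A ⊆ L → sSup A ∈ L)
    (hgen : ∀ c : C, c = sInf {a ∈ L | c ≤ a}) (x : C) :
    (∀ D : Set C, x ≤ sSup D → ∃ d ∈ D, x ≤ d) ↔
      (∀ A : Set C, A ⊆ L → x ≤ sSup A → ∃ a ∈ A, x ≤ a) := by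
  constructor
  · intro h A _ hx
    exact h A hx
  · intro h D hxD
    by_contra hc
    push_neg at hc
    set A : Set C := {a | a ∈ L ∧ ¬ x ≤ a ∧ ∃ d ∈ D, d ≤ a} with hA
    have hAL : A ⊆ L := fun a ha => ha.1
    have hDA : sSup D ≤ sSup A := by
      apply sSup_le
      intro d hd
      have hxd : ¬ x ≤ d := hc d hd
      have hd' : ¬ x ≤ sInf {a ∈ L | d ≤ a} := by rw [← hgen d]; exact hxd
      have : ∃ a ∈ {a ∈ L | d ≤ a}, ¬ x ≤ a := by
        by_contra hno
        push_neg at hno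
        exact hd' (le_sInf hno)
      obtain ⟨a, ⟨haL, hda⟩, hxa⟩ := this
      exact le_trans hda (le_sSup ⟨haL, hxa, d, hd, hda⟩)
    obtain ⟨a, ha, hxa⟩ := h A hAL (hxD.trans hDA)
    exact ha.2.1 hxa
end

section
/- Let L be a frame and 𝒮 a collection of filters of L closed under arbitrary intersections and containing all principal filters ↑a = {x : a ≤ x}. For P ∈ 𝒮, the following are equivalent: (i) for every family (F_i) of members of 𝒮 with ⋂_i F_i ⊆ P there exists i with F_i ⊆ P; (ii) P is a completely prime filter of L, i.e., for every family (x_i) in L with ⨆_i x_i ∈ P there exists i with x_i ∈ P. -/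
/-- let `𝒮` be a collection of filters of a frame `L` closed under arbitrary
intersections and containing all principal filters. For `P ∈ 𝒮`, `P` is completely prime
as an element of `𝒮` (inaccessible by intersections of members of `𝒮`) if and only if `P`
is a completely prime filter of `L`. -/
theorem completely_prime_in_filter_frame_iff {L : Type*} [Order.Frame L]
    (𝒮 : Set (Set L)) (hfilt : ∀ F ∈ 𝒮, IsFrameFilter F)
    (hinter : ∀ 𝒢 : Set (Set L), 𝒢 ⊆ 𝒮 → ⋂₀ 𝒢 ∈ 𝒮)
    (hprin : ∀ a : L, {x : L | a ≤ x} ∈ 𝒮)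
    (P : Set L) (hP : P ∈ 𝒮) :
    (∀ 𝒢 : Set (Set L), 𝒢 ⊆ 𝒮 → ⋂₀ 𝒢 ⊆ P → ∃ F ∈ 𝒢, F ⊆ P) ↔
      (∀ A : Set L, sSup A ∈ P → ∃ a ∈ A, a ∈ P) := by
  constructor
  · intro h A hA
    obtain ⟨F, hF, hFP⟩ := h ((fun a => {x : L | a ≤ x}) '' A)
      (by rintro _ ⟨a, _, rfl⟩; exact hprin a)
      (by
        intro x hx
        have hle : sSup A ≤ x := sSup_le fun a ha => hx _ ⟨a, ha, rfl⟩
        exact (hfilt P hP).2.1 _ _ hA hle)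
    obtain ⟨a, ha, rfl⟩ := hF
    exact ⟨a, ha, hFP le_rfl⟩
  · intro h 𝒢 h𝒢 hsub
    by_contra hcon
    push_neg at hcon
    set A : Set L := {x | x ∉ P ∧ ∃ F ∈ 𝒢, x ∈ F} with hAdef
    have hsupmem : sSup A ∈ ⋂₀ 𝒢 := by
      intro F hF
      obtain ⟨x, hxF, hxP⟩ := Set.not_subset.mp (hcon F hF)
      exact (hfilt F (h𝒢 hF)).2.1 x _ hxF (le_sSup ⟨hxP, F, hF, hxF⟩)
    obtain ⟨a, ha, haP⟩ := h A (hsub hsupmem)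
    exact ha.1 haP
end
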